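/- For probability vectors P and Q in the standard simplex of R^n with the support of P contained in the support of Q, the relative entropy RE(P,Q) = Σ_{i ∈ supp(P)} P(i) ln(P(i)/Q(i)) satisfies RE(P,Q) ≥ ‖P − Q‖², where ‖·‖ is the Euclidean norm. -/

import Mathlib

open scoped Classical
open Real Set



noncomputable def Gf : ℝ → ℝ := fun x => Real.log x - 3/2 * (x - 1) * (x + 5) / (x + 2)^2

lemma hasDerivAt_Gf {x : ℝ} (hx : 0 < x) :
    HasDerivAt Gf ((x - 1)^2 * (x + 8) / (x * (x + 2)^3)) x := by
  have h2 : x + 2 ≠ 0 := by linarith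
  have hu : HasDerivAt (fun x : ℝ => 3/2 * (x - 1) * (x + 5)) (3/2 * (x + 5) + 3/2 * (x - 1)) x := by
    have := ((hasDerivAt_id x).sub_const 1).const_mul (3/2 : ℝ)
    have h := this.mul ((hasDerivAt_id x).add_const 5)
    simpa [mul_one, Pi.mul_def] using h
  have hv : HasDerivAt (fun x : ℝ => (x + 2)^2) (2 * (x + 2)) x := by
    have := ((hasDerivAt_id x).add_const 2).pow 2
    simpa [Pi.pow_def] using this
  have hd := (Real.hasDerivAt_log hx.ne').sub (hu.div hv (pow_ne_zero 2 h2))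
  refine hd.congr_deriv ?_
  field_simp
  ring

lemma Gf_one : Gf 1 = 0 := by simp [Gf]

lemma Gf_mono : MonotoneOn Gf (Ioi 0) := by
  have h : ∀ x ∈ interior (Ioi (0:ℝ)), HasDerivWithinAt Gf
      ((x - 1)^2 * (x + 8) / (x * (x + 2)^3)) (interior (Ioi (0:ℝ))) x := by
    intro x hx
    rw [interior_Ioi] at hx
    exact (hasDerivAt_Gf hx).hasDerivWithinAt
  refine monotoneOn_of_hasDerivWithinAt_nonneg (convex_Ioi 0) ?_ h ?_
  · intro x hx
    exact ((hasDerivAt_Gf hx).differentiableAt).continuousAt.continuousWithinAt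
  · intro x hx
    rw [interior_Ioi] at hx
    have h2 : (0:ℝ) < x + 2 := by linarith [mem_Ioi.mp hx]
    have hx0 := mem_Ioi.mp hx
    positivity



noncomputable def Ff : ℝ → ℝ := fun x => x * Real.log x - x + 1 - 3 * (x - 1)^2 / (2 * (x + 2))

lemma hasDerivAt_Ff {x : ℝ} (hx : 0 < x) : HasDerivAt Ff (Gf x) x := by
  have h2 : (2:ℝ) * (x + 2) ≠ 0 := by positivity
  have hu : HasDerivAt (fun x : ℝ => 3 * (x - 1)^2) (3 * (2 * (x-1))) x := by
    have := (((hasDerivAt_id x).sub_const 1).pow 2).const_mul (3:ℝ)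
    simpa [mul_comm, mul_assoc] using this
  have hv : HasDerivAt (fun x : ℝ => 2 * (x + 2)) 2 x := by
    have := ((hasDerivAt_id x).add_const 2).const_mul (2:ℝ)
    simpa using this
  have hd := ((Real.hasDerivAt_mul_log hx.ne').sub (hasDerivAt_id x)).add_const 1
  have hd2 := hd.sub (hu.div hv h2)
  refine hd2.congr_deriv ?_
  have h2' : x + 2 ≠ 0 := by positivity
  simp only [Gf]
  field_simp
  ring

lemma Ff_one : Ff 1 = 0 := by simp [Ff]

lemma Ff_nonneg {x : ℝ} (hx : 0 < x) : 0 ≤ Ff x := by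
  rcases le_total 1 x with h1 | h1
  · -- monotone on Icc 1 x
    have mono : MonotoneOn Ff (Icc 1 x) := by
      have hD : ∀ t ∈ interior (Icc (1:ℝ) x), HasDerivWithinAt Ff (Gf t)
          (interior (Icc (1:ℝ) x)) t := by
        intro t ht
        rw [interior_Icc] at ht
        exact (hasDerivAt_Ff (by linarith [ht.1] : (0:ℝ) < t)).hasDerivWithinAt
      refine monotoneOn_of_hasDerivWithinAt_nonneg (convex_Icc 1 x) ?_ hD ?_
      · intro t ht
        exact (hasDerivAt_Ff (by linarith [ht.1] : (0:ℝ) < t)).differentiableAt.continuousAt.continuousWithinAt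
      · intro t ht
        rw [interior_Icc] at ht
        have : Gf 1 ≤ Gf t := Gf_mono (mem_Ioi.mpr one_pos) (mem_Ioi.mpr (by linarith [ht.1])) ht.1.le
        rw [Gf_one] at this; exact this
    have := mono (left_mem_Icc.mpr h1) (right_mem_Icc.mpr h1) h1
    rwa [Ff_one] at this
  · have anti : AntitoneOn Ff (Icc x 1) := by
      have hD : ∀ t ∈ interior (Icc x (1:ℝ)), HasDerivWithinAt Ff (Gf t)
          (interior (Icc x (1:ℝ))) t := by
        intro t ht
        rw [interior_Icc] at ht
        exact (hasDerivAt_Ff (lt_trans hx ht.1)).hasDerivWithinAt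
      refine antitoneOn_of_hasDerivWithinAt_nonpos (convex_Icc x 1) ?_ hD ?_
      · intro t ht
        exact (hasDerivAt_Ff (lt_of_lt_of_le hx ht.1)).differentiableAt.continuousAt.continuousWithinAt
      · intro t ht
        rw [interior_Icc] at ht
        have : Gf t ≤ Gf 1 := Gf_mono (mem_Ioi.mpr (lt_trans hx ht.1)) (mem_Ioi.mpr one_pos) ht.2.le
        rw [Gf_one] at this; exact this
    have := anti (left_mem_Icc.mpr h1) (right_mem_Icc.mpr h1) h1
    rwa [Ff_one] at this

lemma key {x : ℝ} (hx : 0 < x) : 3 * (x - 1)^2 / (2 * (x + 2)) ≤ x * Real.log x - x + 1 := by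
  have := Ff_nonneg hx
  simp only [Ff] at this
  linarith


lemma pointwise {p q : ℝ} (hp : 0 ≤ p) (hq : 0 < q) :
    p - q + 3 * (p - q)^2 / (2 * (p + 2*q)) ≤ p * Real.log (p / q) := by
  rcases eq_or_lt_of_le hp with h | h
  · rw [← h]
    have : 3 * (0 - q)^2 / (2 * (0 + 2*q)) = 3/4 * q := by
      field_simp; ring
    rw [this]
    simp
    linarith
  · have hx : 0 < p / q := div_pos h hq
    have hk := key hx
    have := mul_le_mul_of_nonneg_left hk hq.le
    have e1 : q * (3 * (p/q - 1)^2 / (2 * (p/q + 2))) = 3 * (p - q)^2 / (2 * (p + 2*q)) := by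
      field_simp
    have e2 : q * (p/q * Real.log (p/q) - p/q + 1) = p * Real.log (p/q) - p + q := by
      field_simp
    rw [e1, e2] at this
    linarith


lemma sum_sq_le {n : ℕ} (f : Fin n → ℝ) (hf : ∀ i, 0 ≤ f i) :
    ∑ i, f i ^ 2 ≤ (∑ i, f i) ^ 2 := by
  calc ∑ i, f i ^ 2 ≤ ∑ i, f i * ∑ j, f j := Finset.sum_le_sum fun i _ => by
        have := Finset.single_le_sum (fun j _ => hf j) (Finset.mem_univ i)
        nlinarith [hf i]
    _ = (∑ i, f i) ^ 2 := by rw [← Finset.sum_mul]; ring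

theorem stmt0 (n : ℕ) (P Q : Fin n → ℝ)
    (hP : ∀ i, 0 ≤ P i) (hQ : ∀ i, 0 ≤ Q i)
    (hPs : ∑ i, P i = 1) (hQs : ∑ i, Q i = 1)
    (hsupp : ∀ i, 0 < P i → 0 < Q i) :
    ∑ i ∈ Finset.univ.filter (fun i => 0 < P i), P i * Real.log (P i / Q i)
      ≥ ∑ i, (P i - Q i) ^ 2 := by
  set a : Fin n → ℝ := fun i => P i - Q i with ha
  set w : Fin n → ℝ := fun i => P i + 2 * Q i with hw
  set b : Fin n → ℝ := fun i => a i + 3 * a i ^ 2 / (2 * w i) with hb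
  have hwnn : ∀ i, 0 ≤ w i := fun i => by have := hP i; have := hQ i; simp only [hw]; linarith
  have hsa : ∑ i, a i = 0 := by simp only [ha, Finset.sum_sub_distrib, hPs, hQs]; ring
  have hsw : ∑ i, w i = 3 := by
    simp only [hw, Finset.sum_add_distrib, ← Finset.mul_sum, hPs, hQs]; ring
  -- Step A: ∑ b ≤ LHS
  have stepA : ∑ i, b i ≤ ∑ i ∈ Finset.univ.filter (fun i => 0 < P i), P i * Real.log (P i / Q i) := by
    rw [← Finset.sum_filter_add_sum_filter_not Finset.univ (fun i => 0 < P i) b]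
    have h1 : ∑ i ∈ Finset.univ.filter (fun i => 0 < P i), b i
        ≤ ∑ i ∈ Finset.univ.filter (fun i => 0 < P i), P i * Real.log (P i / Q i) := by
      refine Finset.sum_le_sum fun i hi => ?_
      rw [Finset.mem_filter] at hi
      exact pointwise (hP i) (hsupp i hi.2)
    have h2 : ∑ i ∈ Finset.univ.filter (fun i => ¬ 0 < P i), b i ≤ 0 := by
      refine Finset.sum_nonpos fun i hi => ?_
      rw [Finset.mem_filter] at hi
      have hPi : P i = 0 := le_antisymm (not_lt.mp hi.2) (hP i)
      simp only [hb, ha, hw, hPi]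
      rcases eq_or_lt_of_le (hQ i) with h | h
      · rw [← h]; norm_num
      · have : 3 * (0 - Q i) ^ 2 / (2 * (0 + 2 * Q i)) = 3 / 4 * Q i := by
          field_simp; ring
        rw [this]; linarith
    linarith
  -- Step B
  have stepB : ∑ i, b i = 3 / 2 * ∑ i, a i ^ 2 / w i := by
    simp only [hb, Finset.sum_add_distrib, hsa, zero_add, Finset.mul_sum]
    refine Finset.sum_congr rfl fun i _ => ?_
    rw [mul_div_mul_comm]
  -- Step C: L²/2 ≤ ∑ b, where L = ∑ |a|
  set L : ℝ := ∑ i, |a i| with hL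
  have hwzero : ∀ i, w i = 0 → a i = 0 := fun i h => by
    have h1 := hP i; have h2 := hQ i
    simp only [hw] at h
    simp only [ha]
    have : P i = 0 := by linarith
    have : Q i = 0 := by linarith
    simp_all
  have stepC : L ^ 2 / 2 ≤ ∑ i, b i := by
    rw [stepB]
    set s' := Finset.univ.filter (fun i => 0 < w i) with hs'
    have hLs : L = ∑ i ∈ s', |a i| := by
      rw [hL]
      refine (Finset.sum_subset (Finset.subset_univ s') fun i _ hi => ?_).symm
      rw [hs', Finset.mem_filter] at hi
      have : w i = 0 := le_antisymm (not_lt.mp (fun h => hi ⟨Finset.mem_univ i, h⟩)) (hwnn i)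
      rw [hwzero i this]; simp
    have hTs : ∑ i, a i ^ 2 / w i = ∑ i ∈ s', a i ^ 2 / w i := by
      refine (Finset.sum_subset (Finset.subset_univ s') fun i _ hi => ?_).symm
      rw [hs', Finset.mem_filter] at hi
      have : w i = 0 := le_antisymm (not_lt.mp (fun h => hi ⟨Finset.mem_univ i, h⟩)) (hwnn i)
      rw [hwzero i this]; simp
    rcases Finset.eq_empty_or_nonempty s' with he | hne
    · rw [hLs, he]
      have h0 : 0 ≤ ∑ i, a i ^ 2 / w i :=
        Finset.sum_nonneg fun i _ => div_nonneg (sq_nonneg _) (hwnn i)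
      simp
      linarith
    · have hgpos : 0 < ∑ i ∈ s', w i := by
        refine Finset.sum_pos (fun i hi => ?_) hne
        rw [hs', Finset.mem_filter] at hi; exact hi.2
      have hgle : ∑ i ∈ s', w i ≤ 3 := by
        rw [← hsw]
        exact Finset.sum_le_sum_of_subset_of_nonneg (Finset.subset_univ s') fun i _ _ => hwnn i
      have cs := Finset.sq_sum_div_le_sum_sq_div s' (fun i => |a i|)
        (fun i hi => by rw [hs', Finset.mem_filter] at hi; exact hi.2)
      have e : ∑ i ∈ s', |a i| ^ 2 / w i = ∑ i ∈ s', a i ^ 2 / w i := by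
        refine Finset.sum_congr rfl fun i _ => by rw [sq_abs]
      rw [e, ← hLs, ← hTs] at cs
      have h3 : L ^ 2 / 3 ≤ L ^ 2 / ∑ i ∈ s', w i :=
        div_le_div_of_nonneg_left (sq_nonneg L) hgpos hgle
      linarith
  -- Step D: ∑ a² ≤ L²/2
  have stepD : ∑ i, a i ^ 2 ≤ L ^ 2 / 2 := by
    set ap : Fin n → ℝ := fun i => max (a i) 0 with hap
    set am : Fin n → ℝ := fun i => max (-a i) 0 with ham
    have hsq : ∀ i, a i ^ 2 = ap i ^ 2 + am i ^ 2 := fun i => by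
      rcases le_total (a i) 0 with h | h
      · simp only [hap, ham, max_eq_right h, max_eq_left (neg_nonneg.mpr h)]; ring
      · simp only [hap, ham, max_eq_left h, max_eq_right (neg_nonpos.mpr h)]; ring
    have habs : ∀ i, |a i| = ap i + am i := fun i => by
      rcases le_total (a i) 0 with h | h
      · simp only [hap, ham, max_eq_right h, max_eq_left (neg_nonneg.mpr h), abs_of_nonpos h]; ring
      · simp only [hap, ham, max_eq_left h, max_eq_right (neg_nonpos.mpr h), abs_of_nonneg h]; ring
    have hsub : ∀ i, a i = ap i - am i := fun i => by
      rcases le_total (a i) 0 with h | h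
      · simp only [hap, ham, max_eq_right h, max_eq_left (neg_nonneg.mpr h)]; ring
      · simp only [hap, ham, max_eq_left h, max_eq_right (neg_nonpos.mpr h)]; ring
    have hSp : ∑ i, ap i - ∑ i, am i = 0 := by
      rw [← Finset.sum_sub_distrib, ← hsa]
      exact Finset.sum_congr rfl fun i _ => (hsub i).symm
    have hSL : ∑ i, ap i + ∑ i, am i = L := by
      rw [← Finset.sum_add_distrib, hL]
      exact Finset.sum_congr rfl fun i _ => (habs i).symm
    have h1 : ∑ i, ap i ^ 2 ≤ (∑ i, ap i) ^ 2 := sum_sq_le ap fun i => le_max_right _ _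
    have h2 : ∑ i, am i ^ 2 ≤ (∑ i, am i) ^ 2 := sum_sq_le am fun i => le_max_right _ _
    have e : ∑ i, a i ^ 2 = ∑ i, ap i ^ 2 + ∑ i, am i ^ 2 := by
      rw [← Finset.sum_add_distrib]
      exact Finset.sum_congr rfl fun i _ => hsq i
    have hS1 : ∑ i, ap i = L / 2 := by linarith
    have hS2 : ∑ i, am i = L / 2 := by linarith
    rw [hS1] at h1; rw [hS2] at h2
    calc ∑ i, a i ^ 2 ≤ (L/2)^2 + (L/2)^2 := by rw [e]; linarith
      _ = L ^ 2 / 2 := by ring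
  calc ∑ i, (P i - Q i) ^ 2 = ∑ i, a i ^ 2 := rfl
    _ ≤ L ^ 2 / 2 := stepD
    _ ≤ ∑ i, b i := stepC
    _ ≤ _ := stepA
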